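/- Let G be a group, A an abelian normal subgroup generated by elements w₁, ..., w_d each of which has finite conjugacy class in G, and suppose [A, G] is central in G. Then [A, G] is finite, with |[A,G]| ≤ |w₁^G| ⋯ |w_d^G|. -/

import Mathlib

open scoped commutatorElement

theorem commutator_finite_of_fc_generators {G : Type*} [Group G] {d : ℕ} (w : Fin d → G)
    (A : Subgroup G) [A.Normal] (hgen : A = Subgroup.closure (Set.range w))
    (hab : ∀ a ∈ A, ∀ b ∈ A, a * b = b * a)
    (hc : ⁅A, (⊤ : Subgroup G)⁆ ≤ Subgroup.center G)
    (hfc : ∀ i, (Set.range fun g : G => g⁻¹ * w i * g).Finite) :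
    Finite (⁅A, (⊤ : Subgroup G)⁆ : Subgroup G) ∧
      Nat.card (⁅A, (⊤ : Subgroup G)⁆ : Subgroup G) ≤
        ∏ i, Nat.card (Set.range fun g : G => g⁻¹ * w i * g) := by
  have hwA : ∀ i, w i ∈ A := fun i => hgen ▸ Subgroup.subset_closure ⟨i, rfl⟩
  -- commutators with elements of A are central
  have hz : ∀ a ∈ A, ∀ g x : G, ⁅a, g⁆ * x = x * ⁅a, g⁆ := by
    intro a ha g x
    have hmem : ⁅a, g⁆ ∈ Subgroup.center G :=
      hc (Subgroup.commutator_mem_commutator ha (Subgroup.mem_top g))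
    exact (Subgroup.mem_center_iff.mp hmem x).symm
  -- the map g ↦ ⁅w i, g⁆ is a homomorphism
  have hmul : ∀ i, ∀ g h : G, ⁅w i, g * h⁆ = ⁅w i, g⁆ * ⁅w i, h⁆ := by
    intro i g h
    have h1 : ⁅w i, g * h⁆ = ⁅w i, g⁆ * (g * ⁅w i, h⁆ * g⁻¹) := by
      simp only [commutatorElement_def]; group
    rw [h1, ← hz (w i) (hwA i) h g, mul_inv_cancel_right]
  let φ : ∀ _ : Fin d, G →* G := fun i =>
    { toFun := fun g => ⁅w i, g⁆
      map_one' := by simp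
      map_mul' := hmul i }
  let C : Fin d → Subgroup G := fun i => (φ i).range
  have hCcent : ∀ i, C i ≤ Subgroup.center G := by
    rintro i x ⟨g, rfl⟩
    exact hc (Subgroup.commutator_mem_commutator (hwA i) (Subgroup.mem_top g))
  have hcomm : Pairwise fun i j : Fin d =>
      ∀ x y : G, x ∈ C i → y ∈ C j → Commute x y := by
    intro i j _ x y hx _
    exact Subgroup.mem_center_iff.mp (hCcent i hx) y |>.symm
  set J : Subgroup G := ⨆ i, C i with hJ
  -- [A, ⊤] ≤ J
  have hle : ⁅A, (⊤ : Subgroup G)⁆ ≤ J := by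
    rw [Subgroup.commutator_le]
    intro a ha g _
    rw [hgen] at ha
    induction ha using Subgroup.closure_induction with
    | mem x hx =>
      obtain ⟨i, rfl⟩ := hx
      exact le_iSup C i ⟨g, rfl⟩
    | one => simpa using J.one_mem
    | mul x y hx hy ihx ihy =>
      have hyA : y ∈ A := hgen ▸ hy
      have key : ⁅x * y, g⁆ = x * ⁅y, g⁆ * x⁻¹ * ⁅x, g⁆ := by
        simp only [commutatorElement_def]; group
      rw [← hz y hyA g x, mul_inv_cancel_right] at key
      rw [key]
      exact J.mul_mem ihy ihx
    | inv x hx ihx =>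
      have hxA : x ∈ A := hgen ▸ hx
      have hcm : Commute x ⁅x, g⁆ := (hz x hxA g x).symm
      have key : ⁅x⁻¹, g⁆ = x⁻¹ * ⁅x, g⁆⁻¹ * x := by
        simp only [commutatorElement_def]; group
      rw [(hcm.inv_left.inv_right).eq, mul_assoc, inv_mul_cancel, mul_one] at key
      rw [key]
      exact J.inv_mem ihx
  -- each C i is finite with card bounded by the conjugacy class
  have hsub : ∀ i, (Set.range fun g : G => ⁅w i, g⁆) ⊆
      (fun x => w i * x⁻¹) '' (Set.range fun g : G => g⁻¹ * w i * g) := by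
    rintro i _ ⟨g, rfl⟩
    exact ⟨g * w i * g⁻¹, ⟨g⁻¹, by group⟩, by simp only [commutatorElement_def]; group⟩
  have hCfin : ∀ i, ((C i : Set G)).Finite := by
    intro i
    have : (C i : Set G) = Set.range fun g : G => ⁅w i, g⁆ := by
      ext x; simp [C, φ, MonoidHom.mem_range]
    rw [this]
    exact ((hfc i).image _).subset (hsub i)
  haveI : ∀ i, Finite (C i) := fun i => (hCfin i).to_subtype
  have hcard : ∀ i, Nat.card (C i) ≤ Nat.card (Set.range fun g : G => g⁻¹ * w i * g) := by
    intro i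
    have einj : Function.Injective fun x : G => w i * x⁻¹ :=
      (mul_right_injective (w i)).comp inv_injective
    calc Nat.card (C i) = Nat.card ((C i : Set G)) := rfl
      _ ≤ Nat.card ((fun x => w i * x⁻¹) '' (Set.range fun g : G => g⁻¹ * w i * g)) := by
          apply Nat.card_mono ((hfc i).image _)
          have : (C i : Set G) = Set.range fun g : G => ⁅w i, g⁆ := by
            ext x; simp [C, φ, MonoidHom.mem_range]
          rw [this]; exact hsub i
      _ = Nat.card (Set.range fun g : G => g⁻¹ * w i * g) :=
          Nat.card_image_of_injective einj _
  -- J is the range of the product map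
  have hJfin : (J : Set G).Finite := by
    have : J = (Subgroup.noncommPiCoprod hcomm).range := (Subgroup.noncommPiCoprod_range).symm
    rw [this]
    have : ((Subgroup.noncommPiCoprod hcomm).range : Set G) =
        Set.range (Subgroup.noncommPiCoprod hcomm) := MonoidHom.coe_range _
    rw [this]
    exact Set.finite_range _
  have hJcard : Nat.card J ≤ ∏ i, Nat.card (C i) := by
    have h1 := Nat.card_le_card_of_surjective (Subgroup.noncommPiCoprod hcomm).rangeRestrict
      (Subgroup.noncommPiCoprod hcomm).rangeRestrict_surjective
    rw [Subgroup.noncommPiCoprod_range] at h1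
    calc Nat.card J ≤ Nat.card (∀ i, C i) := h1
      _ = ∏ i, Nat.card (C i) := Nat.card_pi
  constructor
  · exact (hJfin.subset hle).to_subtype
  · calc Nat.card (⁅A, (⊤ : Subgroup G)⁆ : Subgroup G)
        ≤ Nat.card J := Nat.card_mono hJfin hle
      _ ≤ ∏ i, Nat.card (C i) := hJcard
      _ ≤ ∏ i, Nat.card (Set.range fun g : G => g⁻¹ * w i * g) :=
          Finset.prod_le_prod' fun i _ => hcard i
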